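/- Let n ≥ 2 and let b > 4 be divisible by 2^n, and let t satisfy 1 ≤ t ≤ n. Suppose (u, v) and (2^t·c, 2^t·d) are base-b difference pairs with (c, d) ≠ (0, 0), and K^t(u, v) = (2^t·c, 2^t·d). Then there exist odd integers i, j with 1 ≤ i, j ≤ 2^t and signs ε₁, ε₂ ∈ {−1, +1} such that, as unordered pairs, {u, v} = {b·i/2^t + ε₁·c, b·j/2^t + ε₂·d}. -/

import Mathlib

/-- The four base-`b` digits of `x` (viewed as a 4-digit string with leading
zeros allowed), sorted in decreasing order. -/
def sortedDigits (b x : ℕ) : List ℕ :=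
  List.insertionSort (· ≥ ·) [x % b, x / b % b, x / b ^ 2 % b, x / b ^ 3 % b]

/-- The 4-digit base-`b` Kaprekar function `K_b(x) = D - A`. -/
def Kap (b x : ℕ) : ℕ :=
  let l := sortedDigits b x
  (l[0]! * b ^ 3 + l[1]! * b ^ 2 + l[2]! * b + l[3]!) -
    (l[3]! * b ^ 3 + l[2]! * b ^ 2 + l[1]! * b + l[0]!)

/-- The difference pair `(a₃ - a₀, a₂ - a₁)` of a 4-digit base-`b` input. -/
def diffPair (b x : ℕ) : ℕ × ℕ :=
  let l := sortedDigits b x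
  (l[0]! - l[3]!, l[1]! - l[2]!)

/-- `S_b`: the set of 4-digit base-`b` inputs whose sequence of Kaprekar
iterates is eventually constant and nonzero. -/
def KapSet (b : ℕ) : Set ℕ :=
  {x | x < b ^ 4 ∧
    ∃ t, (∀ s, t ≤ s → (Kap b)^[s] x = (Kap b)^[t] x) ∧ (Kap b)^[t] x ≠ 0}

/-- Arrange the two coordinates of a pair in decreasing order. -/
def sort2 (p : ℕ × ℕ) : ℕ × ℕ := (max p.1 p.2, min p.1 p.2)

/-- A base-`b` difference pair: `b - 1 ≥ d ≥ d' ≥ 0`. -/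
def IsDiffPair (b : ℕ) (p : ℕ × ℕ) : Prop := p.2 ≤ p.1 ∧ p.1 ≤ b - 1

/-- The Kaprekar map on base-`b` difference pairs. -/
def Kpair (b : ℕ) (p : ℕ × ℕ) : ℕ × ℕ :=
  if p.1 = 0 ∧ p.2 = 0 then (0, 0)
  else if p.2 = 0 then
    -- type (c)
    sort2 (p.1 - 1, b - p.1)
  else if p.1 = p.2 ∨ p.1 + p.2 = b then
    -- type (b)
    sort2 ((2 * (p.1 : ℤ) - ((b : ℤ) - 1)).natAbs,
           (2 * (p.1 : ℤ) - ((b : ℤ) + 1)).natAbs)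
  else
    -- type (a)
    sort2 ((2 * (p.1 : ℤ) - (b : ℤ)).natAbs, (2 * (p.2 : ℤ) - (b : ℤ)).natAbs)

lemma Kpair_zero (b : ℕ) : Kpair b (0, 0) = (0, 0) := by simp [Kpair]

lemma Kpair_diff (b : ℕ) (hb : 2 ≤ b) (p : ℕ × ℕ) (hp : IsDiffPair b p) :
    IsDiffPair b (Kpair b p) := by
  obtain ⟨x, y⟩ := p
  obtain ⟨h1, h2⟩ := hp
  simp only at h1 h2
  unfold Kpair sort2 IsDiffPair
  split_ifs with h0 hy hb' <;> simp only <;> omega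

lemma getS (a : ℤ) (w : ℕ) (h : a.natAbs = w) :
    ∃ s : ℤ, (s = 1 ∨ s = -1) ∧ a = s * w := by
  rcases Int.natAbs_eq a with h' | h'
  · exact ⟨1, Or.inl rfl, by rw [h', h]; ring⟩
  · exact ⟨-1, Or.inr rfl, by rw [h', h]; ring⟩

lemma key_step (b t w w₁ c i : ℕ) (s ε : ℤ)
    (hs : s = 1 ∨ s = -1) (hε : ε = 1 ∨ ε = -1)
    (ht : 1 ≤ t) (hi : Odd i) (hi1 : 1 ≤ i) (hi2 : i ≤ 2 ^ t)
    (h1 : 2 * (w : ℤ) - b = s * w₁)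
    (h2 : (w₁ : ℤ) * 2 ^ t = b * i + ε * (2 * c) * 2 ^ t) :
    ∃ i' : ℕ, Odd i' ∧ 1 ≤ i' ∧ i' ≤ 2 ^ (t + 1) ∧
      ∃ ε' : ℤ, (ε' = 1 ∨ ε' = -1) ∧
        (w : ℤ) * 2 ^ (t + 1) = b * i' + ε' * c * 2 ^ (t + 1) := by
  obtain ⟨m, hm⟩ := hi
  have he : 2 ^ t = 2 * 2 ^ (t - 1) := by
    rw [← pow_succ']
    congr 1
    omega
  rcases hs with rfl | rfl
  · refine ⟨2 ^ t + i, ⟨2 ^ (t - 1) + m, by omega⟩, by omega,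
      by rw [pow_succ]; omega, ε, hε, ?_⟩
    push_cast
    linear_combination (2 : ℤ) ^ t * h1 + h2
  · refine ⟨2 ^ t - i, ⟨2 ^ (t - 1) - m - 1, by omega⟩, by omega,
      by rw [pow_succ]; omega, -ε, by rcases hε with rfl | rfl <;> simp, ?_⟩
    push_cast [hi2]
    linear_combination (2 : ℤ) ^ t * h1 - h2

lemma aux (b : ℕ) (hb4 : 4 < b) :
    ∀ t : ℕ, 1 ≤ t → 2 ^ t ∣ b → ∀ c d u v : ℕ,
      IsDiffPair b (u, v) → (c, d) ≠ (0, 0) →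
      (Kpair b)^[t] (u, v) = (2 ^ t * c, 2 ^ t * d) →
      ∃ i j : ℕ, Odd i ∧ Odd j ∧ 1 ≤ i ∧ i ≤ 2 ^ t ∧ 1 ≤ j ∧ j ≤ 2 ^ t ∧
        ∃ ε₁ ε₂ : ℤ, (ε₁ = 1 ∨ ε₁ = -1) ∧ (ε₂ = 1 ∨ ε₂ = -1) ∧
          (((u : ℤ) * 2 ^ t = (b : ℤ) * i + ε₁ * c * 2 ^ t ∧
            (v : ℤ) * 2 ^ t = (b : ℤ) * j + ε₂ * d * 2 ^ t) ∨
           ((v : ℤ) * 2 ^ t = (b : ℤ) * i + ε₁ * c * 2 ^ t ∧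
            (u : ℤ) * 2 ^ t = (b : ℤ) * j + ε₂ * d * 2 ^ t)) := by
  intro t ht
  induction t, ht using Nat.le_induction with
  | base =>
    intro hdvd c d u v huv hne hK
    have h2b : 2 ∣ b := by rw [pow_one] at hdvd; exact hdvd
    obtain ⟨huv1, huv2⟩ := huv
    simp only at huv1 huv2
    rw [Function.iterate_one] at hK
    unfold Kpair sort2 at hK
    simp only at hK
    split_ifs at hK with h0 hy hb'
    · -- (0,0) case
      exfalso
      apply hne
      have h1 : (0 : ℕ) = 2 ^ 1 * c := congrArg Prod.fst hK
      have h2 : (0 : ℕ) = 2 ^ 1 * d := congrArg Prod.snd hK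
      simp only [Prod.mk.injEq]
      omega
    · -- type (c): parity contradiction
      exfalso
      have h1 : max (u - 1) (b - u) = 2 ^ 1 * c := congrArg Prod.fst hK
      have h2 : min (u - 1) (b - u) = 2 ^ 1 * d := congrArg Prod.snd hK
      omega
    · -- type (b): parity contradiction
      exfalso
      have h1 : max (2 * (u : ℤ) - ((b : ℤ) - 1)).natAbs
          (2 * (u : ℤ) - ((b : ℤ) + 1)).natAbs = 2 ^ 1 * c := congrArg Prod.fst hK
      omega
    · -- type (a)
      have h1 : max (2 * (u : ℤ) - (b : ℤ)).natAbs (2 * (v : ℤ) - (b : ℤ)).natAbs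
          = 2 ^ 1 * c := congrArg Prod.fst hK
      have h2 : min (2 * (u : ℤ) - (b : ℤ)).natAbs (2 * (v : ℤ) - (b : ℤ)).natAbs
          = 2 ^ 1 * d := congrArg Prod.snd hK
      rcases le_total (2 * (v : ℤ) - (b : ℤ)).natAbs (2 * (u : ℤ) - (b : ℤ)).natAbs
        with hle | hle
      · -- u pairs with c, v with d
        have hA : (2 * (u : ℤ) - (b : ℤ)).natAbs = 2 ^ 1 * c := by omega
        have hB : (2 * (v : ℤ) - (b : ℤ)).natAbs = 2 ^ 1 * d := by omega
        obtain ⟨s₁, hs₁, he₁⟩ := getS _ _ hA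
        obtain ⟨s₂, hs₂, he₂⟩ := getS _ _ hB
        refine ⟨1, 1, odd_one, odd_one, le_refl _, by norm_num, le_refl _, by norm_num,
          s₁, s₂, hs₁, hs₂, Or.inl ⟨?_, ?_⟩⟩
        · push_cast at he₁ ⊢; linear_combination he₁
        · push_cast at he₂ ⊢; linear_combination he₂
      · -- u pairs with d, v with c
        have hA : (2 * (u : ℤ) - (b : ℤ)).natAbs = 2 ^ 1 * d := by omega
        have hB : (2 * (v : ℤ) - (b : ℤ)).natAbs = 2 ^ 1 * c := by omega
        obtain ⟨s₁, hs₁, he₁⟩ := getS _ _ hB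
        obtain ⟨s₂, hs₂, he₂⟩ := getS _ _ hA
        refine ⟨1, 1, odd_one, odd_one, le_refl _, by norm_num, le_refl _, by norm_num,
          s₁, s₂, hs₁, hs₂, Or.inr ⟨?_, ?_⟩⟩
        · push_cast at he₁ ⊢; linear_combination he₁
        · push_cast at he₂ ⊢; linear_combination he₂
  | succ t ht IH =>
    intro hdvd c d u v huv hne hK
    have hdvd' : 2 ^ t ∣ b := dvd_trans (pow_dvd_pow 2 (Nat.le_succ t)) hdvd
    have h2b : 2 ∣ b := dvd_trans (dvd_pow_self 2 (by omega)) hdvd'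
    obtain ⟨huv1, huv2⟩ := huv
    simp only at huv1 huv2
    rw [Function.iterate_succ_apply] at hK
    obtain ⟨u₁, v₁, hp⟩ : ∃ u₁ v₁, Kpair b (u, v) = (u₁, v₁) := ⟨_, _, rfl⟩
    rw [hp] at hK
    have hK' : (Kpair b)^[t] (u₁, v₁) = (2 ^ t * (2 * c), 2 ^ t * (2 * d)) := by
      rw [hK]; simp only [Prod.mk.injEq]; constructor <;> ring
    have huv₁ : IsDiffPair b (u₁, v₁) := by
      rw [← hp]; exact Kpair_diff b (by omega) _ ⟨huv1, huv2⟩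
    have hne' : (2 * c, 2 * d) ≠ ((0 : ℕ), (0 : ℕ)) := by
      intro h
      apply hne
      simp only [Prod.mk.injEq] at h ⊢
      omega
    obtain ⟨i, j, hio, hjo, hi1, hi2, hj1, hj2, ε₁, ε₂, hε₁, hε₂, hcases⟩ :=
      IH hdvd' (2 * c) (2 * d) u₁ v₁ huv₁ hne' hK'
    -- (u₁, v₁) ≠ (0,0)
    have hnz : ¬(u₁ = 0 ∧ v₁ = 0) := by
      rintro ⟨rfl, rfl⟩
      rw [Function.iterate_fixed (Kpair_zero b)] at hK'
      apply hne'
      have h1 : (0 : ℕ) = 2 ^ t * (2 * c) := congrArg Prod.fst hK'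
      have h2 : (0 : ℕ) = 2 ^ t * (2 * d) := congrArg Prod.snd hK'
      have h2t : 0 < 2 ^ t := Nat.pow_pos (by norm_num)
      simp only [Prod.mk.injEq]
      constructor <;> nlinarith
    -- u₁, v₁ are even
    obtain ⟨B2, hB2⟩ := hdvd
    have even_of : ∀ (w k e' : ℕ) (ε : ℤ),
        (w : ℤ) * 2 ^ t = b * k + ε * (2 * e') * 2 ^ t → 2 ∣ w := by
      intro w k e' ε h
      have hb' : (b : ℤ) = 2 ^ (t + 1) * B2 := by exact_mod_cast hB2
      have h2t : (2 : ℤ) ^ t ≠ 0 := by positivity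
      have hw : (w : ℤ) = 2 * (B2 * k + ε * e') := by
        apply mul_right_cancel₀ h2t
        rw [h, hb']
        ring
      have : (2 : ℤ) ∣ (w : ℤ) := ⟨_, hw⟩
      exact_mod_cast this
    have hu₁e : 2 ∣ u₁ := by
      rcases hcases with ⟨h1', _⟩ | ⟨_, h2'⟩
      · exact even_of u₁ i c ε₁ (by push_cast at h1' ⊢; linarith)
      · exact even_of u₁ j d ε₂ (by push_cast at h2' ⊢; linarith)
    have hv₁e : 2 ∣ v₁ := by
      rcases hcases with ⟨_, h2'⟩ | ⟨h1', _⟩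
      · exact even_of v₁ j d ε₂ (by push_cast at h2' ⊢; linarith)
      · exact even_of v₁ i c ε₁ (by push_cast at h1' ⊢; linarith)
    -- analyze Kpair (u, v) = (u₁, v₁)
    unfold Kpair sort2 at hp
    simp only at hp
    split_ifs at hp with h0 hy hb'
    · exfalso
      apply hnz
      have h1 : (0 : ℕ) = u₁ := congrArg Prod.fst hp
      have h2 : (0 : ℕ) = v₁ := congrArg Prod.snd hp
      omega
    · exfalso
      have h1 : max (u - 1) (b - u) = u₁ := congrArg Prod.fst hp
      have h2 : min (u - 1) (b - u) = v₁ := congrArg Prod.snd hp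
      omega
    · exfalso
      have h1 : max (2 * (u : ℤ) - ((b : ℤ) - 1)).natAbs
          (2 * (u : ℤ) - ((b : ℤ) + 1)).natAbs = u₁ := congrArg Prod.fst hp
      omega
    · -- type (a)
      have h1 : max (2 * (u : ℤ) - (b : ℤ)).natAbs (2 * (v : ℤ) - (b : ℤ)).natAbs
          = u₁ := congrArg Prod.fst hp
      have h2 : min (2 * (u : ℤ) - (b : ℤ)).natAbs (2 * (v : ℤ) - (b : ℤ)).natAbs
          = v₁ := congrArg Prod.snd hp
      -- normalize IH equations
      have hIH : ((u₁ : ℤ) * 2 ^ t = b * i + ε₁ * (2 * c) * 2 ^ t ∧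
                  (v₁ : ℤ) * 2 ^ t = b * j + ε₂ * (2 * d) * 2 ^ t) ∨
                 ((v₁ : ℤ) * 2 ^ t = b * i + ε₁ * (2 * c) * 2 ^ t ∧
                  (u₁ : ℤ) * 2 ^ t = b * j + ε₂ * (2 * d) * 2 ^ t) := by
        rcases hcases with ⟨ha, hb''⟩ | ⟨ha, hb''⟩ <;>
          push_cast at ha hb'' <;> [left; right] <;> exact ⟨ha, hb''⟩
      rcases le_total (2 * (v : ℤ) - (b : ℤ)).natAbs (2 * (u : ℤ) - (b : ℤ)).natAbs
        with hle | hle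
      · -- u matched with u₁, v with v₁
        have hAu : (2 * (u : ℤ) - (b : ℤ)).natAbs = u₁ := by omega
        have hBv : (2 * (v : ℤ) - (b : ℤ)).natAbs = v₁ := by omega
        obtain ⟨s₁, hs₁, he₁⟩ := getS _ _ hAu
        obtain ⟨s₂, hs₂, he₂⟩ := getS _ _ hBv
        rcases hIH with ⟨ha, hb''⟩ | ⟨ha, hb''⟩
        · -- u ~ (i, c), v ~ (j, d) : Or.inl
          obtain ⟨i', hi'o, hi'1, hi'2, ε₁', hε₁', heq₁⟩ :=
            key_step b t u u₁ c i s₁ ε₁ hs₁ hε₁ ht hio hi1 hi2 he₁ ha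
          obtain ⟨j', hj'o, hj'1, hj'2, ε₂', hε₂', heq₂⟩ :=
            key_step b t v v₁ d j s₂ ε₂ hs₂ hε₂ ht hjo hj1 hj2 he₂ hb''
          exact ⟨i', j', hi'o, hj'o, hi'1, hi'2, hj'1, hj'2, ε₁', ε₂', hε₁', hε₂',
            Or.inl ⟨heq₁, heq₂⟩⟩
        · -- u ~ (j, d), v ~ (i, c) : Or.inr
          obtain ⟨i', hi'o, hi'1, hi'2, ε₁', hε₁', heq₁⟩ :=
            key_step b t v v₁ c i s₂ ε₁ hs₂ hε₁ ht hio hi1 hi2 he₂ ha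
          obtain ⟨j', hj'o, hj'1, hj'2, ε₂', hε₂', heq₂⟩ :=
            key_step b t u u₁ d j s₁ ε₂ hs₁ hε₂ ht hjo hj1 hj2 he₁ hb''
          exact ⟨i', j', hi'o, hj'o, hi'1, hi'2, hj'1, hj'2, ε₁', ε₂', hε₁', hε₂',
            Or.inr ⟨heq₁, heq₂⟩⟩
      · -- u matched with v₁, v with u₁
        have hAu : (2 * (u : ℤ) - (b : ℤ)).natAbs = v₁ := by omega
        have hBv : (2 * (v : ℤ) - (b : ℤ)).natAbs = u₁ := by omega
        obtain ⟨s₁, hs₁, he₁⟩ := getS _ _ hAu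
        obtain ⟨s₂, hs₂, he₂⟩ := getS _ _ hBv
        rcases hIH with ⟨ha, hb''⟩ | ⟨ha, hb''⟩
        · -- u ~ v₁ ~ (j, d), v ~ u₁ ~ (i, c) : Or.inr
          obtain ⟨i', hi'o, hi'1, hi'2, ε₁', hε₁', heq₁⟩ :=
            key_step b t v u₁ c i s₂ ε₁ hs₂ hε₁ ht hio hi1 hi2 he₂ ha
          obtain ⟨j', hj'o, hj'1, hj'2, ε₂', hε₂', heq₂⟩ :=
            key_step b t u v₁ d j s₁ ε₂ hs₁ hε₂ ht hjo hj1 hj2 he₁ hb''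
          exact ⟨i', j', hi'o, hj'o, hi'1, hi'2, hj'1, hj'2, ε₁', ε₂', hε₁', hε₂',
            Or.inr ⟨heq₁, heq₂⟩⟩
        · -- u ~ v₁ ~ (i, c), v ~ u₁ ~ (j, d) : Or.inl
          obtain ⟨i', hi'o, hi'1, hi'2, ε₁', hε₁', heq₁⟩ :=
            key_step b t u v₁ c i s₁ ε₁ hs₁ hε₁ ht hio hi1 hi2 he₁ ha
          obtain ⟨j', hj'o, hj'1, hj'2, ε₂', hε₂', heq₂⟩ :=
            key_step b t v u₁ d j s₂ ε₂ hs₂ hε₂ ht hjo hj1 hj2 he₂ hb''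
          exact ⟨i', j', hi'o, hj'o, hi'1, hi'2, hj'1, hj'2, ε₁', ε₂', hε₁', hε₂',
            Or.inl ⟨heq₁, heq₂⟩⟩

/-- form of the `t`-fold preimages of `(2^t·c, 2^t·d)`.
The conclusion `{u, v} = {b·i/2^t ± c, b·j/2^t ± d}` (as unordered pairs) is
expressed multiplied through by `2^t` to stay in the integers. -/
theorem kaprekar_type_a_predecessors (n b t c d u v : ℕ) (hn : 2 ≤ n)
    (hb4 : 4 < b) (hdvd : 2 ^ n ∣ b) (ht1 : 1 ≤ t) (htn : t ≤ n)
    (huv : IsDiffPair b (u, v)) (hcd : IsDiffPair b (2 ^ t * c, 2 ^ t * d))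
    (hne : (c, d) ≠ (0, 0))
    (hK : (Kpair b)^[t] (u, v) = (2 ^ t * c, 2 ^ t * d)) :
    ∃ i j : ℕ, Odd i ∧ Odd j ∧ 1 ≤ i ∧ i ≤ 2 ^ t ∧ 1 ≤ j ∧ j ≤ 2 ^ t ∧
      ∃ ε₁ ε₂ : ℤ, (ε₁ = 1 ∨ ε₁ = -1) ∧ (ε₂ = 1 ∨ ε₂ = -1) ∧
        (((u : ℤ) * 2 ^ t = (b : ℤ) * i + ε₁ * c * 2 ^ t ∧
          (v : ℤ) * 2 ^ t = (b : ℤ) * j + ε₂ * d * 2 ^ t) ∨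
         ((v : ℤ) * 2 ^ t = (b : ℤ) * i + ε₁ * c * 2 ^ t ∧
          (u : ℤ) * 2 ^ t = (b : ℤ) * j + ε₂ * d * 2 ^ t)) := by
  have hdvd' : 2 ^ t ∣ b := (pow_dvd_pow 2 htn).trans hdvd
  exact aux b hb4 t ht1 hdvd' c d u v huv hne hK
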